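/- Let F : ℝⁿ → ℝ be γ-strongly convex with minimizer w* and Hessian bounded above by LI. Suppose w⁺ = w − α Ĥ⁻¹∇F(w) where Ĥ is symmetric with (1−εΨ)γ I ⪯ Ĥ ⪯ (1+εΨ)L I, and the Armijo condition F(w⁺) ≤ F(w) + αβ pᵀ∇F(w) holds with p = −Ĥ⁻¹∇F(w), β ∈ (0,1). Then F(w⁺) − F(w*) ≤ (1 − ρ)(F(w) − F(w*)) where ρ = 2αβγ /((1+εΨ)L). -/

import Mathlib

open scoped InnerProductSpace

theorem taylor_lower_aux {n : ℕ} (F : EuclideanSpace ℝ (Fin n) → ℝ) (hF : ContDiff ℝ 2 F) (γ : ℝ)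
    (hHessLow : ∀ x v : EuclideanSpace ℝ (Fin n),
      γ * ‖v‖ ^ 2 ≤ ⟪(fderiv ℝ (gradient F) x) v, v⟫_ℝ)
    (w d : EuclideanSpace ℝ (Fin n)) :
    F w + ⟪gradient F w, d⟫_ℝ + γ / 2 * ‖d‖ ^ 2 ≤ F (w + d) := by
  have hF1 : ContDiff ℝ 1 F := hF.of_le (by norm_num)
  have hdiff : Differentiable ℝ F := hF1.differentiable (by norm_num)
  have hgradC : ContDiff ℝ 1 (gradient F) := by
    have h1 : ContDiff ℝ 1 (fderiv ℝ F) := hF.fderiv_right (by norm_num)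
    exact ((InnerProductSpace.toDual ℝ (EuclideanSpace ℝ (Fin n))).symm.contDiff).comp h1
  have hgradD : Differentiable ℝ (gradient F) := hgradC.differentiable (by norm_num)
  have hline : ∀ t : ℝ, HasDerivAt (fun t : ℝ => w + t • d) d t := fun t => by
    simpa using ((hasDerivAt_id t).smul_const d).const_add w
  have hinner : ∀ x : EuclideanSpace ℝ (Fin n), ⟪gradient F x, d⟫_ℝ = fderiv ℝ F x d := fun x =>
    InnerProductSpace.toDual_symm_apply
  have h1 : ∀ t : ℝ, HasDerivAt (fun t : ℝ => F (w + t • d))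
      (⟪gradient F (w + t • d), d⟫_ℝ) t := by
    intro t
    rw [hinner]
    exact ((hdiff _).hasFDerivAt).comp_hasDerivAt t (hline t)
  have h2 : ∀ t : ℝ, HasDerivAt (fun t : ℝ => ⟪gradient F (w + t • d), d⟫_ℝ)
      (⟪(fderiv ℝ (gradient F) (w + t • d)) d, d⟫_ℝ) t := by
    intro t
    have hL : HasFDerivAt (fun x : EuclideanSpace ℝ (Fin n) => ⟪gradient F x, d⟫_ℝ)
        (((innerSL ℝ : EuclideanSpace ℝ (Fin n) →L[ℝ] EuclideanSpace ℝ (Fin n) →L[ℝ] ℝ).flip d).comp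
          (fderiv ℝ (gradient F) (w + t • d)))
        (w + t • d) :=
      (((innerSL ℝ : EuclideanSpace ℝ (Fin n) →L[ℝ] EuclideanSpace ℝ (Fin n) →L[ℝ] ℝ).flip
        d).hasFDerivAt).comp _ ((hgradD _).hasFDerivAt)
    exact hL.comp_hasDerivAt t (hline t)
  set g : ℝ := ⟪gradient F w, d⟫_ℝ with hg
  set φ : ℝ → ℝ := fun t => F (w + t • d) - t * g - γ / 2 * t ^ 2 * ‖d‖ ^ 2 with hφ
  set φ' : ℝ → ℝ := fun t => ⟪gradient F (w + t • d), d⟫_ℝ - g - γ * t * ‖d‖ ^ 2 with hφ'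
  have hφd : ∀ t, HasDerivAt φ (φ' t) t := by
    intro t
    have := ((h1 t).sub ((hasDerivAt_id t).mul_const g)).sub
      (((hasDerivAt_pow 2 t).const_mul (γ / 2)).mul_const (‖d‖ ^ 2))
    refine this.congr_deriv ?_
    simp only [φ', id_eq, pow_one, Nat.cast_ofNat]
    ring
  have hφ'd : ∀ t, HasDerivAt φ'
      (⟪(fderiv ℝ (gradient F) (w + t • d)) d, d⟫_ℝ - γ * ‖d‖ ^ 2) t := by
    intro t
    have := ((h2 t).sub_const g).sub (((hasDerivAt_id t).const_mul γ).mul_const (‖d‖ ^ 2))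
    refine this.congr_deriv ?_
    ring
  have hφ'mono : Monotone φ' := by
    apply monotone_of_deriv_nonneg (fun t => (hφ'd t).differentiableAt)
    intro t
    rw [(hφ'd t).deriv]
    have := hHessLow (w + t • d) d
    linarith
  have hφ'0 : φ' 0 = 0 := by simp [φ', hg]
  have hmonoOn : MonotoneOn φ (Set.Ici (0:ℝ)) := by
    apply monotoneOn_of_deriv_nonneg (convex_Ici 0)
      (fun t _ => (hφd t).differentiableAt.continuousAt.continuousWithinAt)
      (fun t _ => ((hφd t).differentiableAt).differentiableWithinAt)
    intro t ht
    rw [(hφd t).deriv]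
    rw [interior_Ici] at ht
    have := hφ'mono (le_of_lt ht)
    rw [hφ'0] at this
    exact this
  have := hmonoOn (Set.self_mem_Ici) (Set.mem_Ici.mpr zero_le_one) zero_le_one
  simp only [φ, zero_smul, add_zero, one_smul] at this
  linarith

/-- Global linear decrease: if `F` is `C²` with `γI ⪯ ∇²F ⪯ LI`, `w*` its minimizer,
`Ĥ` symmetric with `(1−εΨ)γ I ⪯ Ĥ ⪯ (1+εΨ)L I`, `p = −Ĥ⁻¹∇F(w)`, `w⁺ = w + αp`,
and the Armijo condition holds, then
`F(w⁺) − F(w*) ≤ (1 − ρ)(F(w) − F(w*))` with `ρ = 2αβγ/((1+εΨ)L)`. -/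
theorem global_linear_decrease
    {n : ℕ} (F : EuclideanSpace ℝ (Fin n) → ℝ) (hF : ContDiff ℝ 2 F)
    (γ L ε Ψ α β : ℝ) (hγ : 0 < γ) (hγL : γ ≤ L)
    (hεΨ0 : 0 < ε * Ψ) (hεΨ1 : ε * Ψ < 1) (hα : 0 < α) (hβ0 : 0 < β) (hβ1 : β < 1)
    (hHessLow : ∀ x v : EuclideanSpace ℝ (Fin n),
      γ * ‖v‖ ^ 2 ≤ ⟪(fderiv ℝ (gradient F) x) v, v⟫_ℝ)
    (hHessUpp : ∀ x v : EuclideanSpace ℝ (Fin n),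
      ⟪(fderiv ℝ (gradient F) x) v, v⟫_ℝ ≤ L * ‖v‖ ^ 2)
    (wstar : EuclideanSpace ℝ (Fin n)) (hmin : ∀ v, F wstar ≤ F v)
    (Hhat : EuclideanSpace ℝ (Fin n) →L[ℝ] EuclideanSpace ℝ (Fin n))
    (hsym : ∀ u v, ⟪Hhat u, v⟫_ℝ = ⟪u, Hhat v⟫_ℝ)
    (hHlow : ∀ v, (1 - ε * Ψ) * γ * ‖v‖ ^ 2 ≤ ⟪Hhat v, v⟫_ℝ)
    (hHupp : ∀ v, ⟪Hhat v, v⟫_ℝ ≤ (1 + ε * Ψ) * L * ‖v‖ ^ 2)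
    (w p wplus : EuclideanSpace ℝ (Fin n))
    (hp : Hhat p = -gradient F w) (hwplus : wplus = w + α • p)
    (harmijo : F wplus ≤ F w + α * β * ⟪p, gradient F w⟫_ℝ) :
    F wplus - F wstar ≤ (1 - 2 * α * β * γ / ((1 + ε * Ψ) * L)) * (F w - F wstar) := by
  set c : ℝ := (1 + ε * Ψ) * L with hcdef
  have hL : 0 < L := lt_of_lt_of_le hγ hγL
  have hc : 0 < c := by
    have : (0:ℝ) < 1 + ε * Ψ := by linarith
    exact mul_pos this hL
  set g : EuclideanSpace ℝ (Fin n) := gradient F w with hgdef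
  have hpsd : ∀ v, 0 ≤ ⟪Hhat v, v⟫_ℝ := fun v =>
    le_trans (mul_nonneg (mul_nonneg (by linarith) hγ.le) (sq_nonneg _)) (hHlow v)
  -- Cauchy–Schwarz-type bound: ‖Hhat p‖² ≤ c * ⟪Hhat p, p⟫
  have hCS : ‖Hhat p‖ ^ 2 ≤ c * ⟪Hhat p, p⟫_ℝ := by
    set u : EuclideanSpace ℝ (Fin n) := Hhat p with hudef
    have e2 : ⟪Hhat u, p⟫_ℝ = ‖u‖ ^ 2 := by
      rw [hsym, hudef]; exact real_inner_self_eq_norm_sq u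
    have e3 : ⟪Hhat p, u⟫_ℝ = ‖u‖ ^ 2 := by
      rw [← hudef]; exact real_inner_self_eq_norm_sq u
    have hq : ∀ t : ℝ, 0 ≤ ⟪Hhat u, u⟫_ℝ * (t * t) + (2 * ‖u‖ ^ 2) * t + ⟪Hhat p, p⟫_ℝ := by
      intro t
      have h0 := hpsd (p + t • u)
      have hexp : Hhat (p + t • u) = Hhat p + t • Hhat u := by
        rw [map_add, map_smul]
      rw [hexp] at h0
      have e1 : ⟪Hhat p + t • Hhat u, p + t • u⟫_ℝ
          = ⟪Hhat p, p⟫_ℝ + t * ⟪Hhat p, u⟫_ℝ + t * ⟪Hhat u, p⟫_ℝ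
            + t * t * ⟪Hhat u, u⟫_ℝ := by
        simp only [inner_add_left, inner_add_right, real_inner_smul_left, real_inner_smul_right]
        ring
      rw [e1, e2, e3] at h0
      linarith
    have hdisc := discrim_le_zero hq
    rw [discrim] at hdisc
    have hup : ⟪Hhat u, u⟫_ℝ ≤ c * ‖u‖ ^ 2 := hHupp u
    rcases eq_or_lt_of_le (norm_nonneg u) with h0 | h0
    · have : ‖u‖ ^ 2 = 0 := by rw [← h0]; ring
      rw [this]
      exact mul_nonneg hc.le (hpsd p)
    · have hu2 : 0 < ‖u‖ ^ 2 := by positivity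
      nlinarith [hpsd p, hpsd u]
  -- consequence on the direction p
  have hHp : Hhat p = -g := hp
  have hpg : c * ⟪p, g⟫_ℝ ≤ -‖g‖ ^ 2 := by
    have h1 : ⟪Hhat p, p⟫_ℝ = -⟪p, g⟫_ℝ := by
      rw [hHp, real_inner_comm]
      simp [inner_neg_right]
    have h2 : ‖Hhat p‖ = ‖g‖ := by rw [hHp, norm_neg]
    rw [h2, h1] at hCS
    linarith
  -- PL inequality from strong convexity
  have hPL : 2 * γ * (F w - F wstar) ≤ ‖g‖ ^ 2 := by
    have hT := taylor_lower_aux F hF γ hHessLow w (wstar - w)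
    have heq : w + (wstar - w) = wstar := by abel
    rw [heq] at hT
    have hip : -(‖g‖ * ‖wstar - w‖) ≤ ⟪g, wstar - w⟫_ℝ := by
      have := abs_real_inner_le_norm g (wstar - w)
      cases' abs_le.mp this with h _
      linarith
    have hgt := hT
    nlinarith [sq_nonneg (γ * ‖wstar - w‖ - ‖g‖), norm_nonneg (wstar - w), norm_nonneg g]
  -- combine
  have hab : 0 < α * β := mul_pos hα hβ0
  have hpg' : ⟪p, g⟫_ℝ ≤ -‖g‖ ^ 2 / c := by
    rw [le_div_iff₀ hc]
    nlinarith
  have hstep : F wplus ≤ F w + α * β * (-‖g‖ ^ 2 / c) := by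
    have := mul_le_mul_of_nonneg_left hpg' hab.le
    calc F wplus ≤ F w + α * β * ⟪p, g⟫_ℝ := harmijo
      _ ≤ F w + α * β * (-‖g‖ ^ 2 / c) := by linarith
  have hmono : α * β * (-‖g‖ ^ 2 / c) ≤ α * β * (-(2 * γ * (F w - F wstar)) / c) := by
    have h1 : -‖g‖ ^ 2 / c ≤ -(2 * γ * (F w - F wstar)) / c := by
      exact (div_le_div_iff_of_pos_right hc).mpr (by linarith)
    exact mul_le_mul_of_nonneg_left h1 hab.le
  have hid : α * β * (-(2 * γ * (F w - F wstar)) / c)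
      = -(2 * α * β * γ / c * (F w - F wstar)) := by ring
  have hgoal : (1 - 2 * α * β * γ / c) * (F w - F wstar)
      = (F w - F wstar) - 2 * α * β * γ / c * (F w - F wstar) := by ring
  linarith [hstep, hmono]
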